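/- arXiv:1001.1028 — 2 statements merged into one kernel-verified Lean document; each statement's English description precedes it below -/
import Mathlib

section
/- The entropy functional E(γ) = ∫_0^1 e(γ′(x)) dx is strictly convex on the set ℒ⁰ of 1-Lipschitz functions γ : [0,1] → ℝ with γ(0) = γ(1) = 0: for γ₁ ≠ γ₂ in ℒ⁰ and t ∈ (0,1), E(tγ₁ + (1−t)γ₂) < t·E(γ₁) + (1−t)·E(γ₂). -/
open MeasureTheory Real Set Filter
open scoped NNReal

noncomputable def entFn (x : ℝ) : ℝ :=
  (1 / 2) * ((1 + x) * Real.log (1 + x) + (1 - x) * Real.log (1 - x))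

lemma entFn_continuous : Continuous entFn := by
  have h := Real.continuous_mul_log
  exact continuous_const.mul ((h.comp (continuous_const.add continuous_id)).add
    (h.comp (continuous_const.sub continuous_id)))

lemma entFn_hasDerivAt {x : ℝ} (hx : x ∈ Ioo (-1:ℝ) 1) :
    HasDerivAt entFn ((1/2) * (Real.log (1+x) - Real.log (1-x))) x := by
  have hx1 : (0:ℝ) < 1 + x := by linarith [hx.1]
  have hx2 : (0:ℝ) < 1 - x := by linarith [hx.2]
  have h1 : HasDerivAt (fun y : ℝ => (1 + y) * Real.log (1 + y)) (Real.log (1+x) + 1) x := by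
    have := (Real.hasDerivAt_mul_log hx1.ne').comp x
      ((hasDerivAt_id x).const_add 1)
    simpa [Function.comp_def] using this
  have h2 : HasDerivAt (fun y : ℝ => (1 - y) * Real.log (1 - y)) (-(Real.log (1-x) + 1)) x := by
    have := (Real.hasDerivAt_mul_log hx2.ne').comp x
      ((hasDerivAt_id x).const_sub 1)
    simpa [Function.comp_def] using this
  have := (h1.add h2).const_mul (1/2 : ℝ)
  convert this using 1
  all_goals try rfl
  ring

lemma entFn_deriv2 {x : ℝ} (hx : x ∈ Ioo (-1:ℝ) 1) :
    HasDerivAt (fun y => (1/2) * (Real.log (1+y) - Real.log (1-y))) (1/(1 - x^2)) x := by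
  have hx1 : (0:ℝ) < 1 + x := by linarith [hx.1]
  have hx2 : (0:ℝ) < 1 - x := by linarith [hx.2]
  have h1 : HasDerivAt (fun y : ℝ => Real.log (1 + y)) ((1+x)⁻¹) x := by
    have := (Real.hasDerivAt_log hx1.ne').comp x ((hasDerivAt_id x).const_add 1)
    simpa [Function.comp_def] using this
  have h2 : HasDerivAt (fun y : ℝ => Real.log (1 - y)) (-(1-x)⁻¹) x := by
    have := (Real.hasDerivAt_log hx2.ne').comp x ((hasDerivAt_id x).const_sub 1)
    simpa [Function.comp_def] using this
  have := (h1.sub h2).const_mul (1/2 : ℝ)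
  convert this using 1
  all_goals try rfl
  have h3 : (1:ℝ) - x^2 = (1+x)*(1-x) := by ring
  rw [h3]
  field_simp
  ring

lemma entFn_strictConvexOn : StrictConvexOn ℝ (Icc (-1:ℝ) 1) entFn := by
  apply strictConvexOn_of_deriv2_pos (convex_Icc _ _) entFn_continuous.continuousOn
  intro x hx
  rw [interior_Icc] at hx
  have hx2 : (0:ℝ) < 1 - x^2 := by nlinarith [hx.1, hx.2]
  have e1 : deriv (deriv entFn) x = 1/(1 - x^2) := by
    have hev : deriv entFn =ᶠ[nhds x] fun y => (1/2) * (Real.log (1+y) - Real.log (1-y)) := by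
      filter_upwards [isOpen_Ioo.mem_nhds hx] with y hy
      exact (entFn_hasDerivAt hy).deriv
    rw [hev.deriv_eq]
    exact (entFn_deriv2 hx).deriv
  simpa [Function.iterate_succ, e1] using hx2

lemma abs_deriv_le {f : ℝ → ℝ} (hf : LipschitzWith 1 f) (x : ℝ) : |deriv f x| ≤ 1 := by
  by_cases h : DifferentiableAt ℝ f x
  · have h1 : ‖fderiv ℝ f x‖ ≤ (1:ℝ≥0) := h.hasFDerivAt.le_of_lipschitz hf
    have h2 : deriv f x = fderiv ℝ f x 1 := rfl
    calc |deriv f x| = ‖fderiv ℝ f x 1‖ := by rw [h2]; rfl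
      _ ≤ ‖fderiv ℝ f x‖ * ‖(1:ℝ)‖ := (fderiv ℝ f x).le_opNorm 1
      _ ≤ 1 := by simpa using h1
  · rw [deriv_zero_of_not_differentiableAt h]; simp
open scoped NNReal

lemma seq_tendsto_nhdsNe (p : ℝ) :
    Tendsto (fun n : ℕ => p + 1/((n:ℝ)+1)) atTop (nhdsWithin p {x | x ≠ p}) := by
  apply tendsto_nhdsWithin_of_tendsto_nhds_of_eventually_within
  · simpa using (tendsto_const_nhds (x := p)).add tendsto_one_div_add_atTop_nhds_zero_nat
  · filter_upwards with n
    have : (0:ℝ) < 1/((n:ℝ)+1) := by positivity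
    show p + 1/((n:ℝ)+1) ≠ p
    intro h
    nlinarith [h]

lemma avg_tendsto {f : ℝ → ℝ} (hf : Continuous f) (p : ℝ) :
    Tendsto (fun n : ℕ => (∫ x in p..(p + 1/((n:ℝ)+1)), f x) / (1/((n:ℝ)+1)))
      atTop (nhds (f p)) := by
  have HF : HasDerivAt (fun u => ∫ x in p..u, f x) (f p) p :=
    intervalIntegral.integral_hasDerivAt_right (hf.intervalIntegrable p p)
      (hf.stronglyMeasurable.stronglyMeasurableAtFilter) hf.continuousAt
  have h := (hasDerivAt_iff_tendsto_slope.mp HF).comp (seq_tendsto_nhdsNe p)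
  apply h.congr
  intro n
  simp [Function.comp, slope_def_field, intervalIntegral.integral_same]

lemma slope_seq_tendsto {f : ℝ → ℝ} {x : ℝ} (hx : DifferentiableAt ℝ f x) :
    Tendsto (fun n : ℕ => (f (x + 1/((n:ℝ)+1)) - f x) / (1/((n:ℝ)+1)))
      atTop (nhds (deriv f x)) := by
  have h := (hasDerivAt_iff_tendsto_slope.mp hx.hasDerivAt).comp (seq_tendsto_nhdsNe x)
  apply h.congr
  intro n
  simp [Function.comp, slope_def_field]

lemma lipschitz_FTC {f : ℝ → ℝ} (hf : LipschitzWith 1 f) {a b : ℝ} (hab : a ≤ b) :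
    ∫ x in a..b, deriv f x = f b - f a := by
  have hcont : Continuous f := hf.continuous
  set c : ℕ → ℝ := fun n => 1/((n:ℝ)+1) with hc
  have hcpos : ∀ n, (0:ℝ) < c n := fun n => by positivity
  -- Step A : value of the integral of the difference quotients
  have stepA : ∀ n : ℕ, ∫ x in a..b, (f (x + c n) - f x) / c n
      = ((∫ x in b..(b + c n), f x) - ∫ x in a..(a + c n), f x) / c n := by
    intro n
    have i1 : IntervalIntegrable (fun x => f (x + c n)) volume a b :=
      (hcont.comp (continuous_id.add continuous_const)).intervalIntegrable a b
    have i2 : IntervalIntegrable f volume a b := hcont.intervalIntegrable a b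
    have key : ∫ x in a..b, (f (x + c n) - f x)
        = (∫ x in b..(b + c n), f x) - ∫ x in a..(a + c n), f x := by
      rw [intervalIntegral.integral_sub i1 i2,
        intervalIntegral.integral_comp_add_right f (c n)]
      have e1 : (∫ x in (a + c n)..(b + c n), f x)
          = (∫ x in (a + c n)..b, f x) + ∫ x in b..(b + c n), f x :=
        (intervalIntegral.integral_add_adjacent_intervals
          (hcont.intervalIntegrable _ _) (hcont.intervalIntegrable _ _)).symm
      have e2 : (∫ x in a..b, f x)
          = (∫ x in a..(a + c n), f x) + ∫ x in (a + c n)..b, f x :=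
        (intervalIntegral.integral_add_adjacent_intervals
          (hcont.intervalIntegrable _ _) (hcont.intervalIntegrable _ _)).symm
      rw [e1, e2]
      ring
    calc ∫ x in a..b, (f (x + c n) - f x) / c n
        = (∫ x in a..b, (f (x + c n) - f x)) / c n := by
          rw [intervalIntegral.integral_div]
      _ = ((∫ x in b..(b + c n), f x) - ∫ x in a..(a + c n), f x) / c n := by rw [key]
  -- Step B : limit of RHS
  have stepB : Tendsto (fun n => ((∫ x in b..(b + c n), f x) - ∫ x in a..(a + c n), f x) / c n)
      atTop (nhds (f b - f a)) := by
    have h1 := avg_tendsto hcont b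
    have h2 := avg_tendsto hcont a
    have := h1.sub h2
    apply this.congr
    intro n
    rw [sub_div]
  -- Step C : dominated convergence
  have stepC : Tendsto (fun n => ∫ x in a..b, (f (x + c n) - f x) / c n)
      atTop (nhds (∫ x in a..b, deriv f x)) := by
    rw [intervalIntegral.integral_of_le hab]
    have : ∀ n : ℕ, (∫ x in a..b, (f (x + c n) - f x) / c n)
        = ∫ x in Ioc a b, (f (x + c n) - f x) / c n := fun n =>
      intervalIntegral.integral_of_le hab
    simp only [this]
    apply MeasureTheory.tendsto_integral_of_dominated_convergence (fun _ => (1:ℝ))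
    · intro n
      exact ((hcont.comp (continuous_id.add continuous_const)).sub hcont).div_const
        (c n) |>.aestronglyMeasurable
    · exact integrable_const 1
    · intro n
      filter_upwards with x
      have hd : |f (x + c n) - f x| ≤ c n := by
        have := hf.dist_le_mul (x + c n) x
        simp only [NNReal.coe_one, one_mul, Real.dist_eq] at this
        simpa [abs_of_pos (hcpos n)] using this
      rw [Real.norm_eq_abs, abs_div, abs_of_pos (hcpos n)]
      exact div_le_one_of_le₀ hd (hcpos n).le
    · have hae : ∀ᵐ x ∂(volume : Measure ℝ), DifferentiableAt ℝ f x :=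
        hf.ae_differentiableAt
      have hae' := ae_restrict_of_ae (μ := (volume : Measure ℝ)) (s := Ioc a b) hae
      filter_upwards [hae'] with x hx
      exact slope_seq_tendsto hx
  exact tendsto_nhds_unique stepC (by simpa only [stepA] using stepB)

def L0 : Set (ℝ → ℝ) := {γ | LipschitzWith 1 γ ∧ γ 0 = 0 ∧ γ 1 = 0}

noncomputable def entE (γ : ℝ → ℝ) : ℝ := ∫ x in (0:ℝ)..1, entFn (deriv γ x)

lemma entFn_bound : ∃ M : ℝ, ∀ y : ℝ, |y| ≤ 1 → |entFn y| ≤ M := by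
  obtain ⟨M, hM⟩ := (isCompact_Icc (a := (-1:ℝ)) (b := 1)).exists_bound_of_continuousOn
    entFn_continuous.continuousOn
  refine ⟨M, fun y hy => ?_⟩
  have := hM y (abs_le.mp hy |> fun h => ⟨h.1, h.2⟩)
  simpa using this

lemma ent_integrable {γ : ℝ → ℝ} (hγ : LipschitzWith 1 γ) :
    IntervalIntegrable (fun x => entFn (deriv γ x)) volume 0 1 := by
  obtain ⟨M, hM⟩ := entFn_bound
  have hmeas : Measurable fun x => entFn (deriv γ x) :=
    entFn_continuous.measurable.comp (measurable_deriv γ)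
  rw [intervalIntegrable_iff]
  haveI : IsFiniteMeasure ((volume : Measure ℝ).restrict (Set.uIoc (0:ℝ) 1)) := by
    constructor
    rw [Measure.restrict_apply_univ]
    rw [Set.uIoc_of_le (by norm_num : (0:ℝ) ≤ 1)]
    exact measure_Ioc_lt_top
  apply (integrable_const M).mono' hmeas.aestronglyMeasurable
  filter_upwards with x
  exact hM _ (abs_deriv_le hγ x)

/-- Strict convexity of the entropy functional on `L0`. -/
theorem entE_strictConvex (γ₁ γ₂ : ℝ → ℝ) (h₁ : γ₁ ∈ L0) (h₂ : γ₂ ∈ L0)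
    (hne : ∃ x ∈ Set.Icc (0:ℝ) 1, γ₁ x ≠ γ₂ x) (t : ℝ) (ht : t ∈ Set.Ioo (0:ℝ) 1) :
    entE (fun x => t * γ₁ x + (1 - t) * γ₂ x) < t * entE γ₁ + (1 - t) * entE γ₂ := by
  obtain ⟨hL₁, h10, -⟩ := h₁
  obtain ⟨hL₂, h20, -⟩ := h₂
  obtain ⟨ht0, ht1⟩ := ht
  have hs : (0:ℝ) < 1 - t := by linarith
  set g : ℝ → ℝ := fun x => t * γ₁ x + (1 - t) * γ₂ x with hgdef
  have hLg : LipschitzWith 1 g := by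
    rw [lipschitzWith_iff_dist_le_mul]
    intro x y
    have e1 := hL₁.dist_le_mul x y
    have e2 := hL₂.dist_le_mul x y
    simp only [NNReal.coe_one, one_mul, Real.dist_eq] at e1 e2 ⊢
    have heq : g x - g y = t * (γ₁ x - γ₁ y) + (1 - t) * (γ₂ x - γ₂ y) := by
      simp only [hgdef]; ring
    calc |g x - g y| = |t * (γ₁ x - γ₁ y) + (1 - t) * (γ₂ x - γ₂ y)| := by rw [heq]
      _ ≤ |t * (γ₁ x - γ₁ y)| + |(1 - t) * (γ₂ x - γ₂ y)| := abs_add_le _ _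
      _ = t * |γ₁ x - γ₁ y| + (1 - t) * |γ₂ x - γ₂ y| := by
          rw [abs_mul, abs_mul, abs_of_pos ht0, abs_of_pos hs]
      _ ≤ t * |x - y| + (1 - t) * |x - y| := by
          gcongr
      _ = |x - y| := by ring
  have hderivg : ∀ x, DifferentiableAt ℝ γ₁ x → DifferentiableAt ℝ γ₂ x →
      deriv g x = t * deriv γ₁ x + (1 - t) * deriv γ₂ x := by
    intro x hx1 hx2
    exact ((hx1.hasDerivAt.const_mul t).add (hx2.hasDerivAt.const_mul (1 - t))).deriv
  set ν := (volume : Measure ℝ).restrict (Ioc (0:ℝ) 1) with hν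
  have haeν : ∀ᵐ x ∂ν, DifferentiableAt ℝ γ₁ x ∧ DifferentiableAt ℝ γ₂ x :=
    ae_restrict_of_ae (hL₁.ae_differentiableAt.and hL₂.ae_differentiableAt)
  have hneq : ν {x | deriv γ₁ x ≠ deriv γ₂ x} ≠ 0 := by
    intro hzero
    obtain ⟨x₀, hx₀, hne₀⟩ := hne
    apply hne₀
    have hder_ae : deriv γ₁ =ᵐ[ν] deriv γ₂ := by
      rw [Filter.EventuallyEq, ae_iff]
      exact hzero
    have e1 : ∫ x in (0:ℝ)..x₀, deriv γ₁ x = γ₁ x₀ - γ₁ 0 := lipschitz_FTC hL₁ hx₀.1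
    have e2 : ∫ x in (0:ℝ)..x₀, deriv γ₂ x = γ₂ x₀ - γ₂ 0 := lipschitz_FTC hL₂ hx₀.1
    have e3 : ∫ x in (0:ℝ)..x₀, deriv γ₁ x = ∫ x in (0:ℝ)..x₀, deriv γ₂ x := by
      rw [intervalIntegral.integral_of_le hx₀.1, intervalIntegral.integral_of_le hx₀.1]
      apply MeasureTheory.integral_congr_ae
      exact ae_restrict_of_ae_restrict_of_subset (Ioc_subset_Ioc_right hx₀.2) hder_ae
    rw [h10] at e1
    rw [h20] at e2
    linarith
  have hmem : ∀ (γ : ℝ → ℝ), LipschitzWith 1 γ → ∀ x, deriv γ x ∈ Icc (-1:ℝ) 1 := by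
    intro γ hγ x
    have h := abs_le.mp (abs_deriv_le hγ x)
    exact ⟨h.1, h.2⟩
  set F : ℝ → ℝ := fun x => entFn (deriv g x) with hF
  set G : ℝ → ℝ := fun x => t * entFn (deriv γ₁ x) + (1 - t) * entFn (deriv γ₂ x) with hG
  have hpt : ∀ x, DifferentiableAt ℝ γ₁ x → DifferentiableAt ℝ γ₂ x →
      (F x ≤ G x ∧ (deriv γ₁ x ≠ deriv γ₂ x → F x < G x)) := by
    intro x hx1 hx2
    have hd := hderivg x hx1 hx2
    have ha := hmem γ₁ hL₁ x
    have hb := hmem γ₂ hL₂ x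
    constructor
    · have hcv := entFn_strictConvexOn.convexOn.2 ha hb ht0.le hs.le (by ring)
      simp only [smul_eq_mul] at hcv
      show entFn (deriv g x) ≤ t * entFn (deriv γ₁ x) + (1 - t) * entFn (deriv γ₂ x)
      rw [hd]
      exact hcv
    · intro hne'
      have hcv := entFn_strictConvexOn.2 ha hb hne' ht0 hs (by ring)
      simp only [smul_eq_mul] at hcv
      show entFn (deriv g x) < t * entFn (deriv γ₁ x) + (1 - t) * entFn (deriv γ₂ x)
      rw [hd]
      exact hcv
  have hle : F ≤ᵐ[ν] G := by
    filter_upwards [haeν] with x hx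
    exact (hpt x hx.1 hx.2).1
  have hltne : ν {x | F x < G x} ≠ 0 := by
    intro hzero
    apply hneq
    have hsub : {x | deriv γ₁ x ≠ deriv γ₂ x} ⊆ {x | F x < G x} ∪
        {x | ¬(DifferentiableAt ℝ γ₁ x ∧ DifferentiableAt ℝ γ₂ x)} := by
      intro x hx
      by_cases hd : DifferentiableAt ℝ γ₁ x ∧ DifferentiableAt ℝ γ₂ x
      · exact Or.inl ((hpt x hd.1 hd.2).2 hx)
      · exact Or.inr hd
    have h0 : ν {x | ¬(DifferentiableAt ℝ γ₁ x ∧ DifferentiableAt ℝ γ₂ x)} = 0 := by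
      rw [← ae_iff]
      exact haeν
    refine absurd ?_ hneq
    refine le_antisymm ?_ zero_le
    calc ν {x | deriv γ₁ x ≠ deriv γ₂ x}
        ≤ ν ({x | F x < G x} ∪ {x | ¬(DifferentiableAt ℝ γ₁ x ∧ DifferentiableAt ℝ γ₂ x)}) :=
          measure_mono hsub
      _ ≤ ν {x | F x < G x} + ν {x | ¬(DifferentiableAt ℝ γ₁ x ∧ DifferentiableAt ℝ γ₂ x)} :=
          measure_union_le _ _
      _ = 0 := by rw [hzero, h0, add_zero]
  have hFi : IntervalIntegrable F volume 0 1 := ent_integrable hLg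
  have hGi : IntervalIntegrable G volume 0 1 :=
    ((ent_integrable hL₁).const_mul t).add ((ent_integrable hL₂).const_mul (1 - t))
  have hmain := intervalIntegral.integral_lt_integral_of_ae_le_of_measure_setOf_lt_ne_zero
    (by norm_num : (0:ℝ) ≤ 1) hFi hGi hle hltne
  have hR : (∫ x in (0:ℝ)..1, G x) = t * entE γ₁ + (1 - t) * entE γ₂ := by
    show (∫ x in (0:ℝ)..1,
        (t * entFn (deriv γ₁ x) + (1 - t) * entFn (deriv γ₂ x))) = _
    rw [intervalIntegral.integral_add ((ent_integrable hL₁).const_mul t)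
      ((ent_integrable hL₂).const_mul (1 - t)),
      intervalIntegral.integral_const_mul, intervalIntegral.integral_const_mul]
    rfl
  calc entE g = ∫ x in (0:ℝ)..1, F x := rfl
    _ < ∫ x in (0:ℝ)..1, G x := hmain
    _ = t * entE γ₁ + (1 - t) * entE γ₂ := hR
end

section
/- The Lebesgue measure of the set {z = (x,y) ∈ 𝒟 : E(γ_z) ≤ δ} is Θ(√δ) as δ → 0: there exist constants c, C > 0 and δ₀ > 0 such that for all 0 < δ < δ₀, c√δ ≤ Leb{z ∈ 𝒟 : E(γ_z) ≤ δ} ≤ C√δ. -/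
open MeasureTheory

/-- Entropy of the piecewise-linear curve through (0,0), z, (1,0). -/
noncomputable def entTent (z : ℝ × ℝ) : ℝ :=
  z.1 * entFn (z.2 / z.1) + (1 - z.1) * entFn (z.2 / (1 - z.1))

/-- The rotated square with unit diagonal. -/
def diamond : Set (ℝ × ℝ) := {z | 0 ≤ z.1 ∧ z.1 ≤ 1 ∧ |z.2| ≤ min z.1 (1 - z.1)}

-- log(1+u) ≥ u - u²/2 on [0,1]
lemma log_one_add_ge (u : ℝ) (h0 : 0 ≤ u) (h1 : u ≤ 1) :
    u - u^2/2 ≤ Real.log (1+u) := by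
  rw [Real.le_log_iff_exp_le (by linarith)]
  have e1 : Real.exp u ≤ 1 + u + u^2/2 + u^3/2 := by
    have h := Real.exp_bound' h0 h1 (n := 3) (by norm_num)
    simp [Finset.sum_range_succ, Nat.factorial] at h
    nlinarith [h, pow_nonneg h0 3]
  have e2 : 1 + u^2/2 ≤ Real.exp (u^2/2) := by
    have := Real.add_one_le_exp (u^2/2); linarith
  have e3 : Real.exp (u - u^2/2) * Real.exp (u^2/2) = Real.exp u := by
    rw [← Real.exp_add]; ring_nf
  nlinarith [Real.exp_pos (u - u^2/2), Real.exp_pos (u^2/2)]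

-- log(1-u) ≥ -u - u²/(2(1-u)) on [0,1)
lemma log_one_sub_ge (u : ℝ) (h0 : 0 ≤ u) (h1 : u < 1) :
    -u - u^2/(2*(1-u)) ≤ Real.log (1-u) := by
  have hu : (0:ℝ) < 1 - u := by linarith
  rw [Real.le_log_iff_exp_le hu]
  set t : ℝ := u^2/(2*(1-u)) with ht
  have ht0 : 0 ≤ t := by positivity
  have htu : t * (2*(1-u)) = u^2 := by
    rw [ht]; field_simp
  have e1 : 1 + u + u^2/2 ≤ Real.exp u := by
    have h2 := Real.sum_le_exp_of_nonneg h0 3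
    simp [Finset.sum_range_succ, Nat.factorial] at h2
    nlinarith [h2]
  have e2 : 1 + t ≤ Real.exp t := by
    have := Real.add_one_le_exp t; linarith
  have key : 1 ≤ (1-u) * Real.exp (u + t) := by
    rw [Real.exp_add]
    nlinarith [Real.exp_pos u, Real.exp_pos t, mul_le_mul e1 e2 (by linarith) (Real.exp_pos u).le]
  have e3 : Real.exp (-u - t) * Real.exp (u + t) = 1 := by
    rw [← Real.exp_add]; ring_nf; exact Real.exp_zero
  nlinarith [Real.exp_pos (u+t), Real.exp_pos (-u-t)]

lemma entFn_neg (u : ℝ) : entFn (-u) = entFn u := by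
  unfold entFn
  rw [show (1:ℝ) + -u = 1 - u by ring, show (1:ℝ) - -u = 1 + u by ring]
  ring

lemma entFn_ge_aux (u : ℝ) (h0 : 0 ≤ u) (h1 : u ≤ 1) : u^2/4 ≤ entFn u := by
  rcases eq_or_lt_of_le h1 with rfl | h1
  · unfold entFn
    norm_num
    nlinarith [Real.log_two_gt_d9]
  · have l1 := log_one_add_ge u h0 h1.le
    have l2 := log_one_sub_ge u h0 h1
    have hu : (0:ℝ) < 1 - u := by linarith
    have m1 : (1+u) * (u - u^2/2) ≤ (1+u) * Real.log (1+u) :=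
      mul_le_mul_of_nonneg_left l1 (by linarith)
    have m2 : (1-u) * (-u - u^2/(2*(1-u))) ≤ (1-u) * Real.log (1-u) :=
      mul_le_mul_of_nonneg_left l2 hu.le
    have key : (1-u) * (-u - u^2/(2*(1-u))) = -u + u^2 - u^2/2 := by
      field_simp
      ring
    unfold entFn
    rw [key] at m2
    nlinarith [pow_nonneg h0 3, sq_nonneg u]

lemma entFn_ge (u : ℝ) (h : |u| ≤ 1) : u^2/4 ≤ entFn u := by
  rcases abs_le.1 h with ⟨hl, hr⟩
  rcases le_total 0 u with h0 | h0
  · exact entFn_ge_aux u h0 hr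
  · have := entFn_ge_aux (-u) (by linarith) (by linarith)
    rw [entFn_neg] at this
    nlinarith [this]

lemma entFn_le_aux (u : ℝ) (h0 : 0 ≤ u) (h1 : u ≤ 1) : entFn u ≤ u^2 := by
  rcases eq_or_lt_of_le h1 with rfl | h1
  · unfold entFn
    norm_num
    nlinarith [Real.log_two_lt_d9]
  · have l1 : Real.log (1+u) ≤ u := by
      have := Real.log_le_sub_one_of_pos (show (0:ℝ) < 1 + u by linarith); linarith
    have l2 : Real.log (1-u) ≤ -u := by
      have := Real.log_le_sub_one_of_pos (show (0:ℝ) < 1 - u by linarith); linarith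
    have m1 : (1+u) * Real.log (1+u) ≤ (1+u) * u :=
      mul_le_mul_of_nonneg_left l1 (by linarith)
    have m2 : (1-u) * Real.log (1-u) ≤ (1-u) * (-u) :=
      mul_le_mul_of_nonneg_left l2 (by linarith)
    unfold entFn
    nlinarith

lemma entFn_le (u : ℝ) (h : |u| ≤ 1) : entFn u ≤ u^2 := by
  rcases abs_le.1 h with ⟨hl, hr⟩
  rcases le_total 0 u with h0 | h0
  · exact entFn_le_aux u h0 hr
  · have := entFn_le_aux (-u) (by linarith) (by linarith)
    rw [entFn_neg] at this
    nlinarith [this]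

lemma entFn_zero : entFn 0 = 0 := by
  unfold entFn; norm_num

/-- Pointwise lower bound: on the diamond, y² ≤ entTent. -/
lemma sq_le_entTent (z : ℝ × ℝ) (hz : z ∈ diamond) : z.2^2 ≤ entTent z := by
  obtain ⟨x, y⟩ := z
  obtain ⟨hx0, hx1, hy⟩ := hz
  simp only at hx0 hx1 hy ⊢
  rcases eq_or_lt_of_le hx0 with rfl | hx0
  · have hy0 : y = 0 := by simpa using hy
    simp [entTent, hy0, entFn_zero]
  rcases eq_or_lt_of_le hx1 with rfl | hx1
  · have hy0 : y = 0 := by simpa using hy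
    simp [entTent, hy0, entFn_zero]
  · have hx1' : (0:ℝ) < 1 - x := by linarith
    have hyx : |y / x| ≤ 1 := by
      rw [abs_div, abs_of_pos hx0, div_le_one hx0]
      exact hy.trans (min_le_left _ _)
    have hyx' : |y / (1-x)| ≤ 1 := by
      rw [abs_div, abs_of_pos hx1', div_le_one hx1']
      exact hy.trans (min_le_right _ _)
    have b1 := entFn_ge _ hyx
    have b2 := entFn_ge _ hyx'
    have m1 : x * ((y/x)^2/4) ≤ x * entFn (y/x) :=
      mul_le_mul_of_nonneg_left b1 hx0.le
    have m2 : (1-x) * ((y/(1-x))^2/4) ≤ (1-x) * entFn (y/(1-x)) :=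
      mul_le_mul_of_nonneg_left b2 hx1'.le
    have e1 : x * ((y/x)^2/4) = y^2/(4*x) := by
      field_simp
    have e2 : (1-x) * ((y/(1-x))^2/4) = y^2/(4*(1-x)) := by
      field_simp
    rw [e1] at m1; rw [e2] at m2
    have key : y^2 ≤ y^2/(4*x) + y^2/(4*(1-x)) := by
      rw [div_add_div _ _ (by positivity) (by positivity), le_div_iff₀ (by positivity)]
      nlinarith [sq_nonneg (y*(1-2*x))]
    unfold entTent
    simp only
    linarith

/-- Pointwise upper bound on the central rectangle. -/
lemma entTent_le (x y : ℝ) (hx : x ∈ Set.Icc (1/4:ℝ) (3/4)) (hy : |y| ≤ 1/4) :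
    entTent (x, y) ≤ 8 * y^2 := by
  obtain ⟨hxl, hxr⟩ := hx
  have hx0 : (0:ℝ) < x := by linarith
  have hx1 : (0:ℝ) < 1 - x := by linarith
  have hyx : |y / x| ≤ 1 := by
    rw [abs_div, abs_of_pos hx0, div_le_one hx0]; linarith
  have hyx' : |y / (1-x)| ≤ 1 := by
    rw [abs_div, abs_of_pos hx1, div_le_one hx1]; linarith
  have b1 := entFn_le _ hyx
  have b2 := entFn_le _ hyx'
  have m1 : x * entFn (y/x) ≤ x * (y/x)^2 := mul_le_mul_of_nonneg_left b1 hx0.le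
  have m2 : (1-x) * entFn (y/(1-x)) ≤ (1-x) * (y/(1-x))^2 :=
    mul_le_mul_of_nonneg_left b2 hx1.le
  have e1 : x * (y/x)^2 = y^2/x := by field_simp
  have e2 : (1-x) * (y/(1-x))^2 = y^2/(1-x) := by field_simp
  rw [e1] at m1; rw [e2] at m2
  have k1 : y^2/x ≤ 4*y^2 := by
    rw [div_le_iff₀ hx0]; nlinarith [sq_nonneg y]
  have k2 : y^2/(1-x) ≤ 4*y^2 := by
    rw [div_le_iff₀ hx1]; nlinarith [sq_nonneg y]
  unfold entTent
  simp only
  linarith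

theorem measure_low_entropy_region_sqrt :
    ∃ c C δ₀ : ℝ, 0 < c ∧ 0 < C ∧ 0 < δ₀ ∧
      ∀ δ : ℝ, 0 < δ → δ < δ₀ →
        c * Real.sqrt δ ≤ (volume {z ∈ diamond | entTent z ≤ δ}).toReal ∧
        (volume {z ∈ diamond | entTent z ≤ δ}).toReal ≤ C * Real.sqrt δ := by
  refine ⟨1/3, 2, 1/4, by norm_num, by norm_num, by norm_num, ?_⟩
  intro δ hδ hδ'
  set s := Real.sqrt δ with hs
  have hs0 : 0 < s := Real.sqrt_pos.2 hδ
  have hs2 : s^2 = δ := Real.sq_sqrt hδ.le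
  have hs1 : s < 1/2 := by nlinarith
  set S := {z ∈ diamond | entTent z ≤ δ} with hS
  -- upper bound inclusion
  have hsub : S ⊆ Set.Icc (0:ℝ) 1 ×ˢ Set.Icc (-s) s := by
    rintro z ⟨⟨hx0, hx1, _⟩, hE⟩
    refine ⟨⟨hx0, hx1⟩, ?_⟩
    have h2 : z.2^2 ≤ δ := le_trans (sq_le_entTent z (by exact ⟨hx0, hx1, by tauto⟩)) hE
    have := Real.abs_le_sqrt h2
    rw [← hs] at this
    exact abs_le.1 this
  -- lower bound inclusion
  have hsub' : Set.Icc (1/4:ℝ) (3/4) ×ˢ Set.Icc (-(s/3)) (s/3) ⊆ S := by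
    rintro ⟨x, y⟩ ⟨hx, hy⟩
    have hy' : |y| ≤ s/3 := abs_le.2 hy
    have hy4 : |y| ≤ 1/4 := by linarith
    refine ⟨⟨show (0:ℝ) ≤ x by linarith [hx.1], show x ≤ 1 by linarith [hx.2], ?_⟩, ?_⟩
    · show |y| ≤ min x (1-x)
      rw [le_min_iff]
      exact ⟨by linarith [hx.1], by linarith [hx.2]⟩
    · have := entTent_le x y hx hy4
      have hy2 : y^2 ≤ (s/3)^2 := by
        nlinarith [abs_nonneg y, sq_abs y]
      calc entTent (x, y) ≤ 8 * y^2 := this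
        _ ≤ 8 * (s/3)^2 := by linarith
        _ ≤ δ := by nlinarith
  -- volumes of the rectangles
  have hvol1 : volume (Set.Icc (0:ℝ) 1 ×ˢ Set.Icc (-s) s) = ENNReal.ofReal (2*s) := by
    rw [Measure.volume_eq_prod, Measure.prod_prod, Real.volume_Icc, Real.volume_Icc,
      ← ENNReal.ofReal_mul (by norm_num)]
    congr 1; ring
  have hvol2 : volume (Set.Icc (1/4:ℝ) (3/4) ×ˢ Set.Icc (-(s/3)) (s/3))
      = ENNReal.ofReal (s/3) := by
    rw [Measure.volume_eq_prod, Measure.prod_prod, Real.volume_Icc, Real.volume_Icc,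
      ← ENNReal.ofReal_mul (by norm_num)]
    congr 1; ring
  have hUB : volume S ≤ ENNReal.ofReal (2*s) := hvol1 ▸ measure_mono hsub
  have hLB : ENNReal.ofReal (s/3) ≤ volume S := hvol2 ▸ measure_mono hsub'
  have hne : volume S ≠ ⊤ := (lt_of_le_of_lt hUB ENNReal.ofReal_lt_top).ne
  constructor
  · have := ENNReal.toReal_mono hne hLB
    rw [ENNReal.toReal_ofReal (by positivity)] at this
    linarith
  · have := ENNReal.toReal_mono ENNReal.ofReal_ne_top hUB
    rw [ENNReal.toReal_ofReal (by positivity)] at this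
    linarith
end
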